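/- Let Λ be a countable index set, (κ_λ)_{λ∈Λ} ∈ (0,∞)^Λ with sup_λ κ_λ < ∞, and let (φ_α)_{α>0} be a non-linear regularizing filter satisfying Assumption B. Let z ∈ ℓ²(Λ) be such that c⁺ := (z_λ/κ_λ)_λ ∈ ℓ²(Λ) and such that for some α̃ > 0 there exists w ∈ ℓ²(Λ) with φ_{α̃}(κ_λ, w_λ) = z_λ for all λ. Let (z^k)_k in ℓ²(Λ) satisfy ‖z^k − z‖_{ℓ²} ≤ δ_k, where δ_k → 0, α_k → 0 and there is a constant C > 0 with α_k ≥ C·δ_k² for all k. Then x^k := (φ_{α_k}(κ_λ, z^k_λ)/κ_λ)_λ converges weakly to c⁺ in ℓ²(Λ), i.e. ⟨x^k, w⟩ → ⟨c⁺, w⟩ for every w ∈ ℓ²(Λ). -/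

import Mathlib

open scoped ENNReal RealInnerProductSpace
open Filter

noncomputable section

/-- A non-linear regularizing filter: `φ α κ` is (F1) monotone, (F2) nonexpansive,
(F3) zero at zero, and (F4) converges pointwise to the identity as `α → 0`. -/
def IsRegFilter (φ : ℝ → ℝ → ℝ → ℝ) : Prop :=
  (∀ α > (0 : ℝ), ∀ κ > (0 : ℝ), Monotone (φ α κ)) ∧
  (∀ α > (0 : ℝ), ∀ κ > (0 : ℝ), ∀ x y : ℝ, |φ α κ x - φ α κ y| ≤ |x - y|) ∧
  (∀ α > (0 : ℝ), ∀ κ > (0 : ℝ), φ α κ 0 = 0) ∧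
  (∀ κ > (0 : ℝ), ∀ c : ℝ,
    Tendsto (fun α => φ α κ c) (nhdsWithin 0 (Set.Ioi 0)) (nhds c))

/-- Assumption B: (B1) `α ↦ |φ_α(κ,x)|` increases as `α` decreases, and (B2) there are
`d, e > 0` with `|φ_α(κ,x)| ≤ (eκ/√α)·|x|` whenever `|x| ≤ dα/κ`. -/
def AssumptionB (φ : ℝ → ℝ → ℝ → ℝ) : Prop :=
  (∀ κ > (0 : ℝ), ∀ x : ℝ, ∀ α β : ℝ, 0 < α → α ≤ β → |φ β κ x| ≤ |φ α κ x|) ∧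
  (∃ d > (0 : ℝ), ∃ e > (0 : ℝ), ∀ κ > (0 : ℝ), ∀ α > (0 : ℝ), ∀ x : ℝ,
    |x| ≤ d * α / κ → |φ α κ x| ≤ e * κ / Real.sqrt α * |x|)

private lemma two_toReal_pos : (0:ℝ) < (2:ℝ≥0∞).toReal := by norm_num

private lemma memℓp_two_of_le {ι : Type*} {f g : ι → ℝ} (hg : Memℓp g 2)
    (h : ∀ i, |f i| ≤ |g i|) : Memℓp f 2 := by
  apply memℓp_gen
  refine Summable.of_nonneg_of_le (fun i => ?_) (fun i => ?_) (hg.summable two_toReal_pos)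
  · positivity
  · simpa [Real.norm_eq_abs] using
      Real.rpow_le_rpow (abs_nonneg _) (h i) (le_of_lt two_toReal_pos)

private lemma memℓp_two_of_le' {ι : Type*} {f g : ι → ℝ} (hg : Memℓp g 2) (c : ℝ)
    (hc : 0 ≤ c) (h : ∀ i, |f i| ≤ c * |g i|) : Memℓp f 2 := by
  refine memℓp_two_of_le (hg.const_smul c) (fun i => (h i).trans ?_)
  simp [Pi.smul_apply, smul_eq_mul, abs_mul, abs_of_nonneg hc]

private lemma lpnorm_le_of_le {ι : Type*} {f g : lp (fun _ : ι => ℝ) 2}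
    (h : ∀ i, |f i| ≤ |g i|) : ‖f‖ ≤ ‖g‖ := by
  refine lp.norm_le_of_tsum_le two_toReal_pos (norm_nonneg g) ?_
  rw [lp.norm_rpow_eq_tsum two_toReal_pos g]
  refine Summable.tsum_le_tsum (fun i => ?_) ((lp.memℓp f).summable two_toReal_pos)
    ((lp.memℓp g).summable two_toReal_pos)
  simpa [Real.norm_eq_abs] using
    Real.rpow_le_rpow (abs_nonneg _) (h i) (le_of_lt two_toReal_pos)

set_option maxHeartbeats 1000000 in
theorem statement9 {Λ : Type*} [Countable Λ]
    (κ : Λ → ℝ) (hκ : ∀ l, 0 < κ l) (hκbd : BddAbove (Set.range κ))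
    (φ : ℝ → ℝ → ℝ → ℝ) (hfilter : IsRegFilter φ) (hB : AssumptionB φ)
    (z : lp (fun _ : Λ => ℝ) 2)
    (hcplus : Memℓp (fun l => z l / κ l) 2)
    (αt : ℝ) (hαt : 0 < αt) (w0 : lp (fun _ : Λ => ℝ) 2)
    (hw0 : ∀ l, φ αt (κ l) (w0 l) = z l)
    (zk : ℕ → lp (fun _ : Λ => ℝ) 2) (δ αs : ℕ → ℝ)
    (hαpos : ∀ k, 0 < αs k)
    (hzk : ∀ k, ‖zk k - z‖ ≤ δ k)
    (hδ0 : Tendsto δ atTop (nhds 0)) (hα0 : Tendsto αs atTop (nhds 0))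
    (C : ℝ) (hC : 0 < C) (hCδ : ∀ k, C * δ k ^ 2 ≤ αs k) :
    ∃ hxk : ∀ k, Memℓp (fun l => φ (αs k) (κ l) (zk k l) / κ l) 2,
      ∀ w : lp (fun _ : Λ => ℝ) 2,
        Tendsto
          (fun k =>
            ⟪(⟨fun l => φ (αs k) (κ l) (zk k l) / κ l, hxk k⟩ : lp (fun _ : Λ => ℝ) 2), w⟫)
          atTop
          (nhds ⟪(⟨fun l => z l / κ l, hcplus⟩ : lp (fun _ : Λ => ℝ) 2), w⟫) := by
  classical
  obtain ⟨hmono, hnonexp, hzero, hlim⟩ := hfilter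
  obtain ⟨hB1, d, hd, e, he, hB2⟩ := hB
  have habs : ∀ α : ℝ, 0 < α → ∀ κ' : ℝ, 0 < κ' → ∀ x : ℝ, |φ α κ' x| ≤ |x| := by
    intro α hα κ' hκ' x
    have h := hnonexp α hα κ' hκ' x 0
    simpa [hzero α hα κ' hκ'] using h
  have hδnn : ∀ k, 0 ≤ δ k := fun k => le_trans (norm_nonneg _) (hzk k)
  have hnle : ∀ k l, |zk k l - z l| ≤ δ k := by
    intro k l
    have h := lp.norm_apply_le_norm (p := 2) (by norm_num) (zk k - z) l
    rw [lp.coeFn_sub] at h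
    simpa [Real.norm_eq_abs] using h.trans (hzk k)
  -- the componentwise bound
  have key : ∀ k l, |φ (αs k) (κ l) (zk k l) / κ l| ≤
      2 * |z l / κ l| + (4 / (d * αs k)) * |zk k l - z l| ^ 2
        + (2 * e / Real.sqrt (αs k)) * |zk k l - z l| := by
    intro k l
    have hα : 0 < αs k := hαpos k
    have hκl : 0 < κ l := hκ l
    set n' := |zk k l - z l| with hn'
    have hn'0 : 0 ≤ n' := abs_nonneg _
    have hA : |zk k l| ≤ |z l| + n' := by
      calc |zk k l| = |z l + (zk k l - z l)| := by ring_nf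
        _ ≤ |z l| + n' := abs_add_le _ _
    have habs_div : |φ (αs k) (κ l) (zk k l) / κ l| = |φ (αs k) (κ l) (zk k l)| / κ l := by
      rw [abs_div, abs_of_pos hκl]
    have hsqrt : 0 < Real.sqrt (αs k) := Real.sqrt_pos.mpr hα
    have t2 : 0 ≤ (4 / (d * αs k)) * n' ^ 2 := by positivity
    have t3 : 0 ≤ (2 * e / Real.sqrt (αs k)) * n' := by positivity
    have t1 : 0 ≤ 2 * |z l / κ l| := by positivity
    rcases le_or_gt n' |z l| with hcase | hcase
    · -- noise dominated by signal
      have h1 : |φ (αs k) (κ l) (zk k l)| ≤ 2 * |z l| :=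
        (habs _ hα _ hκl _).trans (hA.trans (by linarith))
      have h2 : |φ (αs k) (κ l) (zk k l)| / κ l ≤ 2 * |z l| / κ l := by gcongr
      have h3 : 2 * |z l| / κ l = 2 * |z l / κ l| := by
        rw [abs_div, abs_of_pos hκl]; ring
      rw [habs_div]; rw [h3] at h2; linarith
    · rcases le_or_gt (2 * n') (d * αs k / κ l) with hsm | hbg
      · -- small coefficient: use B2
        have hAle : |zk k l| ≤ d * αs k / κ l := hA.trans (by linarith)
        have hb2 := hB2 (κ l) hκl (αs k) hα (zk k l) hAle
        have h3 : |φ (αs k) (κ l) (zk k l)| ≤ e * κ l / Real.sqrt (αs k) * (2 * n') :=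
          hb2.trans (mul_le_mul_of_nonneg_left (hA.trans (by linarith)) (by positivity))
        have h4 : |φ (αs k) (κ l) (zk k l)| / κ l ≤ (2 * e / Real.sqrt (αs k)) * n' := by
          rw [div_le_iff₀ hκl]
          refine h3.trans (le_of_eq ?_)
          field_simp
        rw [habs_div]; linarith
      · -- large coefficient: noise dominates, big component
        have hn'pos : 0 < n' := lt_of_le_of_lt (abs_nonneg (z l)) hcase
        have h1 : |φ (αs k) (κ l) (zk k l)| ≤ 2 * n' :=
          (habs _ hα _ hκl _).trans (hA.trans (by linarith))
        have hκbound : d * αs k ≤ 2 * n' * κ l := by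
          rw [div_lt_iff₀ hκl] at hbg; linarith
        have h4 : |φ (αs k) (κ l) (zk k l)| / κ l ≤ 4 / (d * αs k) * n' ^ 2 := by
          rw [div_le_iff₀ hκl]
          have hda : 0 < d * αs k := by positivity
          refine h1.trans ?_
          rw [div_mul_eq_mul_div, div_mul_eq_mul_div, le_div_iff₀ hda]
          nlinarith
        rw [habs_div]; linarith
  -- membership
  have hnmem : ∀ k, Memℓp (fun l => zk k l - z l) 2 := by
    intro k
    have := lp.memℓp (zk k - z)
    rw [lp.coeFn_sub] at this
    exact this
  have m1 : Memℓp (fun l => 2 * |z l / κ l|) 2 := by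
    refine memℓp_two_of_le' hcplus 2 (by norm_num) (fun l => ?_)
    rw [abs_mul, abs_abs]; norm_num
  have m2 : ∀ k, Memℓp (fun l => (4 / (d * αs k)) * |zk k l - z l| ^ 2) 2 := by
    intro k
    have hα := hαpos k
    have hda : (0:ℝ) ≤ 4 / (d * αs k) := by positivity
    refine memℓp_two_of_le' (hnmem k) ((4 / (d * αs k)) * δ k)
      (mul_nonneg hda (hδnn k)) (fun l => ?_)
    have h1 : |zk k l - z l| ^ 2 ≤ δ k * |zk k l - z l| := by
      have := hnle k l; nlinarith [abs_nonneg (zk k l - z l)]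
    have hlhs : |(4 / (d * αs k)) * |zk k l - z l| ^ 2| =
        (4 / (d * αs k)) * |zk k l - z l| ^ 2 := abs_of_nonneg (by positivity)
    rw [hlhs]
    calc (4 / (d * αs k)) * |zk k l - z l| ^ 2
        ≤ (4 / (d * αs k)) * (δ k * |zk k l - z l|) := mul_le_mul_of_nonneg_left h1 hda
      _ = ((4 / (d * αs k)) * δ k) * |zk k l - z l| := by ring
  have m3 : ∀ k, Memℓp (fun l => (2 * e / Real.sqrt (αs k)) * |zk k l - z l|) 2 := by
    intro k
    have hα := hαpos k
    refine memℓp_two_of_le' (hnmem k) (2 * e / Real.sqrt (αs k)) (by positivity)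
      (fun l => le_of_eq ?_)
    rw [abs_mul, abs_abs, abs_of_nonneg (by positivity : (0:ℝ) ≤ 2 * e / Real.sqrt (αs k))]
  have hxk : ∀ k, Memℓp (fun l => φ (αs k) (κ l) (zk k l) / κ l) 2 := by
    intro k
    refine memℓp_two_of_le (((m1.add (m2 k)).add (m3 k))) (fun l => ?_)
    exact (key k l).trans (le_abs_self _)
  refine ⟨hxk, fun w => ?_⟩
  set cp : lp (fun _ : Λ => ℝ) 2 := ⟨fun l => z l / κ l, hcplus⟩ with hcp
  set Xk : ℕ → lp (fun _ : Λ => ℝ) 2 :=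
    fun k => ⟨fun l => φ (αs k) (κ l) (zk k l) / κ l, hxk k⟩ with hXkdef
  -- uniform norm bound
  set M : ℝ := 2 * ‖cp‖ + 4 / (d * C) + 2 * e / Real.sqrt C with hMdef
  have hsC : 0 < Real.sqrt C := Real.sqrt_pos.mpr hC
  have hM : ∀ k, ‖Xk k‖ ≤ M := by
    intro k
    have hα : 0 < αs k := hαpos k
    have hsα : 0 < Real.sqrt (αs k) := Real.sqrt_pos.mpr hα
    set V1 : lp (fun _ : Λ => ℝ) 2 := ⟨fun l => 2 * |z l / κ l|, m1⟩
    set V2 : lp (fun _ : Λ => ℝ) 2 := ⟨fun l => (4 / (d * αs k)) * |zk k l - z l| ^ 2, m2 k⟩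
    set V3 : lp (fun _ : Λ => ℝ) 2 :=
      ⟨fun l => (2 * e / Real.sqrt (αs k)) * |zk k l - z l|, m3 k⟩
    have hstep1 : ‖Xk k‖ ≤ ‖V1 + V2 + V3‖ := by
      refine lpnorm_le_of_le (fun l => ?_)
      have hco : (V1 + V2 + V3) l = V1 l + V2 l + V3 l := by
        simp [lp.coeFn_add, Pi.add_apply]
      rw [hco]
      exact (key k l).trans (le_abs_self _)
    have hV1 : ‖V1‖ ≤ 2 * ‖cp‖ := by
      have h0 : ‖V1‖ ≤ ‖(2:ℝ) • cp‖ := by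
        refine lpnorm_le_of_le (fun l => ?_)
        have hr : ((2:ℝ) • cp) l = 2 * (z l / κ l) := by
          rw [lp.coeFn_smul, Pi.smul_apply, smul_eq_mul]
        rw [hr]
        show abs (2 * |z l / κ l|) ≤ abs (2 * (z l / κ l))
        rw [abs_mul, abs_mul, abs_abs]
      refine h0.trans (le_of_eq ?_)
      rw [norm_smul]; simp
    have hV2 : ‖V2‖ ≤ 4 / (d * C) := by
      have h1 : ‖V2‖ ≤ ‖((4 / (d * αs k)) * δ k) • (zk k - z)‖ := by
        refine lpnorm_le_of_le (fun l => ?_)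
        have hda : (0:ℝ) ≤ 4 / (d * αs k) := by positivity
        have hcnn : (0:ℝ) ≤ 4 / (d * αs k) * δ k := mul_nonneg hda (hδnn k)
        have hr : (((4 / (d * αs k)) * δ k) • (zk k - z)) l =
            ((4 / (d * αs k)) * δ k) * (zk k l - z l) := by
          rw [lp.coeFn_smul, Pi.smul_apply, smul_eq_mul, lp.coeFn_sub, Pi.sub_apply]
        rw [hr]
        show |(4 / (d * αs k)) * |zk k l - z l| ^ 2| ≤
          |((4 / (d * αs k)) * δ k) * (zk k l - z l)|
        have hsq : |zk k l - z l| ^ 2 ≤ δ k * |zk k l - z l| := by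
          have := hnle k l; nlinarith [abs_nonneg (zk k l - z l)]
        rw [abs_of_nonneg (by positivity : (0:ℝ) ≤ (4 / (d * αs k)) * |zk k l - z l| ^ 2),
          abs_mul, abs_of_nonneg hcnn]
        calc (4 / (d * αs k)) * |zk k l - z l| ^ 2
            ≤ (4 / (d * αs k)) * (δ k * |zk k l - z l|) := mul_le_mul_of_nonneg_left hsq hda
          _ = ((4 / (d * αs k)) * δ k) * |zk k l - z l| := by ring
      refine h1.trans ?_
      rw [norm_smul]
      have hcnn : (0:ℝ) ≤ 4 / (d * αs k) * δ k := mul_nonneg (by positivity) (hδnn k)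
      rw [Real.norm_eq_abs, abs_of_nonneg hcnn]
      calc 4 / (d * αs k) * δ k * ‖zk k - z‖ ≤ 4 / (d * αs k) * δ k * δ k := by
            refine mul_le_mul_of_nonneg_left (hzk k) hcnn
        _ = 4 * (δ k ^ 2) / (d * αs k) := by ring
        _ ≤ 4 / (d * C) := by
            rw [div_le_div_iff₀ (by positivity) (by positivity)]
            have := hCδ k
            nlinarith [hd, hα, hC, sq_nonneg (δ k)]
    have hV3 : ‖V3‖ ≤ 2 * e / Real.sqrt C := by
      have h1 : ‖V3‖ ≤ ‖((2 * e / Real.sqrt (αs k))) • (zk k - z)‖ := by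
        refine lpnorm_le_of_le (fun l => ?_)
        have hr : (((2 * e / Real.sqrt (αs k))) • (zk k - z)) l =
            (2 * e / Real.sqrt (αs k)) * (zk k l - z l) := by
          rw [lp.coeFn_smul, Pi.smul_apply, smul_eq_mul, lp.coeFn_sub, Pi.sub_apply]
        rw [hr]
        show abs ((2 * e / Real.sqrt (αs k)) * |zk k l - z l|) ≤
          abs ((2 * e / Real.sqrt (αs k)) * (zk k l - z l))
        rw [abs_mul, abs_mul, abs_abs]
      refine h1.trans ?_
      rw [norm_smul, Real.norm_eq_abs,
        abs_of_nonneg (by positivity : (0:ℝ) ≤ 2 * e / Real.sqrt (αs k))]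
      have hδs : δ k * Real.sqrt C ≤ Real.sqrt (αs k) := by
        have h2 : Real.sqrt (δ k ^ 2 * C) ≤ Real.sqrt (αs k) := by
          refine Real.sqrt_le_sqrt ?_
          have := hCδ k; linarith [hCδ k]
        calc δ k * Real.sqrt C = Real.sqrt (δ k ^ 2) * Real.sqrt C := by
              rw [Real.sqrt_sq (hδnn k)]
          _ = Real.sqrt (δ k ^ 2 * C) := (Real.sqrt_mul (sq_nonneg _) C).symm
          _ ≤ Real.sqrt (αs k) := h2
      calc 2 * e / Real.sqrt (αs k) * ‖zk k - z‖ ≤ 2 * e / Real.sqrt (αs k) * δ k :=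
            mul_le_mul_of_nonneg_left (hzk k) (by positivity)
        _ ≤ 2 * e / Real.sqrt C := by
            rw [div_mul_eq_mul_div, div_le_div_iff₀ hsα hsC]
            nlinarith [hδs, he, hsα, hsC, hδnn k]
    calc ‖Xk k‖ ≤ ‖V1 + V2 + V3‖ := hstep1
      _ ≤ ‖V1‖ + ‖V2‖ + ‖V3‖ := norm_add₃_le
      _ ≤ M := by rw [hMdef]; linarith
  -- pointwise convergence
  have hαin : Tendsto αs atTop (nhdsWithin 0 (Set.Ioi 0)) :=
    tendsto_nhdsWithin_of_tendsto_nhds_of_eventually_within _ hα0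
      (Eventually.of_forall fun k => Set.mem_Ioi.mpr (hαpos k))
  have hptd : ∀ l, Tendsto (fun k => Xk k l) atTop (nhds (cp l)) := by
    intro l
    have hκl := hκ l
    have hcomp : Tendsto (fun k => φ (αs k) (κ l) (z l)) atTop (nhds (z l)) :=
      (hlim (κ l) hκl (z l)).comp hαin
    have hbt : Tendsto (fun k => |φ (αs k) (κ l) (z l) - z l|) atTop (nhds 0) := by
      simpa using (hcomp.sub_const (z l)).abs
    have hbound : ∀ k, |Xk k l - cp l| ≤ (δ k + |φ (αs k) (κ l) (z l) - z l|) / κ l := by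
      intro k
      have hα := hαpos k
      have h1 : Xk k l - cp l = (φ (αs k) (κ l) (zk k l) - z l) / κ l := by
        show φ (αs k) (κ l) (zk k l) / κ l - z l / κ l = _
        rw [div_sub_div_same]
      rw [h1, abs_div, abs_of_pos hκl]
      have h2 : |φ (αs k) (κ l) (zk k l) - z l| ≤ δ k + |φ (αs k) (κ l) (z l) - z l| := by
        calc |φ (αs k) (κ l) (zk k l) - z l|
            ≤ |φ (αs k) (κ l) (zk k l) - φ (αs k) (κ l) (z l)|
              + |φ (αs k) (κ l) (z l) - z l| := abs_sub_le _ _ _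
          _ ≤ |zk k l - z l| + |φ (αs k) (κ l) (z l) - z l| := by
              have := hnonexp (αs k) hα (κ l) hκl (zk k l) (z l); linarith
          _ ≤ δ k + |φ (αs k) (κ l) (z l) - z l| := by have := hnle k l; linarith
      gcongr
    have hzero' : Tendsto (fun k => (δ k + |φ (αs k) (κ l) (z l) - z l|) / κ l)
        atTop (nhds 0) := by
      have := (hδ0.add hbt).div_const (κ l)
      simpa using this
    have habs0 : Tendsto (fun k => |Xk k l - cp l|) atTop (nhds 0) :=
      squeeze_zero (fun k => abs_nonneg _) hbound hzero'
    rw [tendsto_iff_norm_sub_tendsto_zero]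
    simpa [Real.norm_eq_abs] using habs0
  -- weak convergence
  have key0 : Tendsto (fun k => ⟪Xk k - cp, w⟫) atTop (nhds 0) := by
    rw [Metric.tendsto_atTop]
    intro ε hε
    have hM0 : 0 ≤ M := by
      rw [hMdef]; positivity
    set B : ℝ := M + ‖cp‖ with hBdef
    have hB0 : 0 ≤ B := by rw [hBdef]; positivity
    have hB1' : 0 < B + 1 := by linarith
    set q : ℝ := ε / (2 * (B + 1)) with hqdef
    have hq0 : 0 < q := by rw [hqdef]; positivity
    obtain ⟨F, hF⟩ : ∃ F : Finset Λ,
        ‖(∑ i ∈ F, lp.single 2 i (w i)) - w‖ < q := by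
      have hs := lp.hasSum_single (E := fun _ : Λ => ℝ) (p := 2) (by norm_num) w
      have := (Metric.tendsto_nhds.mp hs q hq0).exists
      obtain ⟨F, hF⟩ := this
      exact ⟨F, by simpa [dist_eq_norm] using hF⟩
    set wF : lp (fun _ : Λ => ℝ) 2 := ∑ i ∈ F, lp.single 2 i (w i) with hwF
    have hfin : Tendsto (fun k => ∑ i ∈ F, (Xk k i - cp i) * w i) atTop (nhds 0) := by
      have hterm : ∀ i ∈ F, Tendsto (fun k => (Xk k i - cp i) * w i) atTop (nhds 0) := by
        intro i _
        have := ((hptd i).sub_const (cp i)).mul_const (w i)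
        simpa using this
      have := tendsto_finset_sum F hterm
      simpa using this
    obtain ⟨N, hN⟩ := Metric.tendsto_atTop.mp hfin (ε / 2) (half_pos hε)
    refine ⟨N, fun k hk => ?_⟩
    have hsplit : ⟪Xk k - cp, w⟫ = ⟪Xk k - cp, wF⟫ + ⟪Xk k - cp, (w - wF)⟫ := by
      rw [← inner_add_right]
      congr 1
      abel
    have hinner1 : ⟪Xk k - cp, wF⟫ = ∑ i ∈ F, (Xk k i - cp i) * w i := by
      rw [hwF, inner_sum]
      refine Finset.sum_congr rfl (fun i _ => ?_)
      rw [lp.inner_single_right]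
      simp [lp.coeFn_sub, RCLike.inner_apply]
      ring
    have hcs : |⟪Xk k - cp, (w - wF)⟫| ≤ B * q := by
      refine (abs_real_inner_le_norm _ _).trans ?_
      have h1 : ‖Xk k - cp‖ ≤ B := by
        rw [hBdef]
        refine (norm_sub_le _ _).trans ?_
        have := hM k; linarith
      have h2 : ‖w - wF‖ ≤ q := by
        rw [← norm_neg]
        simp only [neg_sub]
        exact (le_of_lt (by simpa [hwF] using hF))
      exact mul_le_mul h1 h2 (norm_nonneg _) hB0
    have hBq : B * q ≤ ε / 2 := by
      have h1 : B * q ≤ (B + 1) * q := by nlinarith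
      have h2 : (B + 1) * q = ε / 2 := by
        rw [hqdef]
        field_simp
      linarith
    have hfink := hN k hk
    rw [Real.dist_eq, sub_zero] at hfink ⊢
    calc |⟪Xk k - cp, w⟫| ≤ |⟪Xk k - cp, wF⟫| + |⟪Xk k - cp, (w - wF)⟫| := by
          rw [hsplit]; exact abs_add_le _ _
      _ < ε / 2 + ε / 2 := by
          have := hinner1 ▸ hfink
          have h3 : |⟪Xk k - cp, wF⟫| < ε / 2 := by rw [hinner1]; exact hfink
          have h4 := hcs.trans hBq
          linarith
      _ = ε := by ring
  have heq : (fun k => ⟪Xk k, w⟫) = fun k => ⟪Xk k - cp, w⟫ + ⟪cp, w⟫ := by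
    funext k
    rw [inner_sub_left]
    ring
  have := key0.add_const ⟪cp, w⟫
  rw [zero_add] at this
  show Tendsto (fun k => ⟪Xk k, w⟫) atTop (nhds ⟪cp, w⟫)
  rw [heq]
  exact this
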